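/- Let n be a positive integer, P ∈ ℝ^{n×n} symmetric positive definite, a ∈ ℝ^n, and b > 0. Then the ellipsoid inclusion {x ∈ ℝ^n : xᵀPx ≤ 1} ⊆ {x ∈ ℝ^n : aᵀx ≤ b} holds if and only if aᵀP⁻¹a ≤ b². -/

import Mathlib

open Matrix Finset

private lemma quad_eq {n : ℕ} (M : Matrix (Fin n) (Fin n) ℝ) (x y : Fin n → ℝ) :
    ∑ i, ∑ k, x i * M i k * y k = x ⬝ᵥ (M *ᵥ y) := by
  simp [dotProduct, mulVec, Finset.mul_sum, mul_assoc]

/-- **Ellipsoid-in-halfspace characterization (used in Algorithm 1).**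
For a symmetric positive definite `P`, `a ∈ ℝ^n` and `b > 0`:
`{x : xᵀPx ≤ 1} ⊆ {x : aᵀx ≤ b}` if and only if `aᵀ P⁻¹ a ≤ b²`. -/
theorem ellipsoid_subset_halfspace_iff
    {n : ℕ} (hn : 0 < n)
    (P : Matrix (Fin n) (Fin n) ℝ) (hP : P.IsSymm)
    (hPpos : ∀ z : Fin n → ℝ, z ≠ 0 → 0 < ∑ i, ∑ k, z i * P i k * z k)
    (a : Fin n → ℝ) (b : ℝ) (hb : 0 < b) :
    {x : Fin n → ℝ | (∑ i, ∑ k, x i * P i k * x k) ≤ 1} ⊆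
        {x : Fin n → ℝ | (∑ k, a k * x k) ≤ b} ↔
      (∑ i, ∑ k, a i * P⁻¹ i k * a k) ≤ b ^ 2 := by
  classical
  have hPD : P.PosDef := by
    refine Matrix.PosDef.of_dotProduct_mulVec_pos ?_ (fun z hz => ?_)
    · rwa [Matrix.IsHermitian, conjTranspose_eq_transpose_of_trivial]
    · have h := hPpos z hz
      rw [quad_eq] at h
      simpa using h
  have hQPD : (P⁻¹).PosDef := hPD.inv
  have hdet : IsUnit P.det := P.isUnit_iff_isUnit_det.mp hPD.isUnit
  have hPQ : P * P⁻¹ = 1 := Matrix.mul_nonsing_inv P hdet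
  set u : Fin n → ℝ := P⁻¹ *ᵥ a with hu
  have hPu : P *ᵥ u = a := by
    rw [hu, Matrix.mulVec_mulVec, hPQ, Matrix.one_mulVec]
  set S : ℝ := a ⬝ᵥ (P⁻¹ *ᵥ a) with hS
  -- rewrite sums
  have hsumS : (∑ i, ∑ k, a i * P⁻¹ i k * a k) = S := quad_eq _ _ _
  have hax : ∀ x : Fin n → ℝ, (∑ k, a k * x k) = a ⬝ᵥ x := fun x => rfl
  -- inner product facts
  have hinner_ux : ∀ x : Fin n → ℝ, u ⬝ᵥ (P *ᵥ x) = a ⬝ᵥ x := by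
    intro x
    rw [Matrix.dotProduct_mulVec, ← Matrix.mulVec_transpose, hP.eq, hPu]
  have huu : u ⬝ᵥ (P *ᵥ u) = S := by
    rw [hinner_ux u, hS, hu]
  have hSnn : 0 ≤ S := by
    rw [← huu]
    simpa using hPD.posSemidef.dotProduct_mulVec_nonneg u
  constructor
  · intro hsub
    rw [hsumS]
    by_cases ha : a = 0
    · simp [hS, ha]
      positivity
    · have hSpos : 0 < S := by
        have := hQPD.dotProduct_mulVec_pos ha
        simpa [hS] using this
      set c : ℝ := Real.sqrt S with hc
      have hcpos : 0 < c := Real.sqrt_pos.mpr hSpos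
      have hc2 : c ^ 2 = S := Real.sq_sqrt hSnn
      set x₀ : Fin n → ℝ := c⁻¹ • u with hx0
      have hmem : x₀ ∈ {x : Fin n → ℝ | (∑ i, ∑ k, x i * P i k * x k) ≤ 1} := by
        show (∑ i, ∑ k, x₀ i * P i k * x₀ k) ≤ 1
        rw [quad_eq, hx0, Matrix.mulVec_smul, smul_dotProduct, dotProduct_smul, huu]
        have h1 : c⁻¹ * (c⁻¹ * S) = 1 := by
          rw [← hc2]; field_simp
        simp [smul_eq_mul, h1]
      have hle := hsub hmem
      have haxc : a ⬝ᵥ x₀ = c := by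
        rw [hx0, dotProduct_smul]
        have : a ⬝ᵥ u = S := by rw [hS, hu]
        rw [this, smul_eq_mul, ← hc2]
        field_simp
      have : c ≤ b := by
        have := hle
        simpa [Set.mem_setOf_eq, hax, haxc] using this
      nlinarith
  · intro hSb x hx
    rw [hsumS] at hSb
    simp only [Set.mem_setOf_eq] at hx ⊢
    rw [quad_eq] at hx
    rw [hax]
    -- Cauchy–Schwarz via the discriminant
    have key : ∀ t : ℝ, 0 ≤ (x ⬝ᵥ (P *ᵥ x)) * t ^ 2 + (2 * (a ⬝ᵥ x)) * t + S := by
      intro t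
      have h0 := hPD.posSemidef.dotProduct_mulVec_nonneg (u + t • x)
      simp only [star_trivial] at h0
      have hexp : (u + t • x) ⬝ᵥ (P *ᵥ (u + t • x)) =
          (x ⬝ᵥ (P *ᵥ x)) * t ^ 2 + (2 * (a ⬝ᵥ x)) * t + S := by
        rw [Matrix.mulVec_add, Matrix.mulVec_smul, dotProduct_add, add_dotProduct,
          add_dotProduct, dotProduct_smul, smul_dotProduct, smul_dotProduct,
          dotProduct_smul, huu, hinner_ux x]
        have hxu : x ⬝ᵥ (P *ᵥ u) = a ⬝ᵥ x := by
          rw [hPu, dotProduct_comm]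
        rw [hxu]
        simp only [smul_eq_mul]
        ring
      rw [hexp] at h0
      exact h0
    have hdisc : discrim (x ⬝ᵥ (P *ᵥ x)) (2 * (a ⬝ᵥ x)) S ≤ 0 := by
      by_cases hxx : x ⬝ᵥ (P *ᵥ x) = 0
      · have hx0 : x = 0 := by
          by_contra hxne
          exact absurd hxx (ne_of_gt (by simpa using hPD.dotProduct_mulVec_pos hxne))
        simp [discrim, hx0, hSnn]
      · exact discrim_le_zero (fun t => by nlinarith [key t])
    rw [discrim] at hdisc
    have hCS : (a ⬝ᵥ x) ^ 2 ≤ S * (x ⬝ᵥ (P *ᵥ x)) := by nlinarith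
    have hxxnn : 0 ≤ x ⬝ᵥ (P *ᵥ x) := by simpa using hPD.posSemidef.dotProduct_mulVec_nonneg x
    nlinarith
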